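/- Let n ≥ 0 be an integer, let q_{2n+1}(t) = (1−t²) P′_{2n+1}(t) / P′_{2n+1}(0), and define A(z) = Σ_{k=0}^{n+1} (−1)^k z^{2n+2−2k} q_{2n+1}^{(2k)}(0), B(z) = Σ_{k=0}^{n+1} (−1)^k z^{2n+2−2k} q_{2n+1}^{(2k)}(1), C(z) = Σ_{k=0}^{n} (−1)^{k+1} z^{2n+1−2k} q_{2n+1}^{(2k+1)}(1). Then the function g(z) = A(z) − B(z) cos z − C(z) sin z has vanishing j-th derivative at z = 0 for every j ≤ 2n+3. -/

import Mathlib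

open Real Polynomial

/-- The Legendre polynomial of degree `m`, given by its explicit formula. -/
noncomputable def legendreP (m : ℕ) : Polynomial ℝ :=
  Polynomial.C (((2 : ℝ) ^ m)⁻¹) *
    ∑ k ∈ Finset.range (m / 2 + 1),
      Polynomial.C ((-1 : ℝ) ^ k * (Nat.factorial (2 * m - 2 * k) : ℝ) /
          ((Nat.factorial k : ℝ) * (Nat.factorial (m - k) : ℝ) *
            (Nat.factorial (m - 2 * k) : ℝ))) *
        Polynomial.X ^ (m - 2 * k)

lemma sum_range_odd_split {M : Type*} [AddCommMonoid M] (m : ℕ) (f : ℕ → M) :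
    ∑ r ∈ Finset.range (2*m+1), f r
      = (∑ k ∈ Finset.range (m+1), f (2*k)) + ∑ k ∈ Finset.range m, f (2*k+1) := by
  induction m with
  | zero => simp
  | succ m ih =>
      have h : 2*(m+1)+1 = (2*m+1)+1+1 := by ring
      rw [h, Finset.sum_range_succ, Finset.sum_range_succ, ih,
        Finset.sum_range_succ (fun k => f (2*k)) (m+1),
        Finset.sum_range_succ (fun k => f (2*k+1)) m]
      rw [show 2*m+1+1 = 2*(m+1) by ring]
      abel

lemma eval0_itd_CXpow {R : Type*} [CommRing R] (c : R) (m j : ℕ) :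
    (Polynomial.derivative^[j] (Polynomial.C c * Polynomial.X ^ m)).eval 0
      = if j = m then c * (m.factorial : R) else 0 := by
  rw [Polynomial.iterate_derivative_C_mul, Polynomial.iterate_derivative_X_pow_eq_smul]
  rcases lt_trichotomy j m with h | h | h
  · simp [h.ne, Nat.sub_ne_zero_of_lt h, zero_pow]
  · subst h
    simp [Nat.descFactorial_self, mul_comm]
  · have : m.descFactorial j = 0 := Nat.descFactorial_eq_zero_iff_lt.mpr h
    simp [this, h.ne']

lemma itd_sum {R : Type*} [CommSemiring R] {ι : Type*} (s : Finset ι) (f : ι → Polynomial R) (j : ℕ) :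
    Polynomial.derivative^[j] (∑ i ∈ s, f i) = ∑ i ∈ s, Polynomial.derivative^[j] (f i) := by
  induction j with
  | zero => simp
  | succ j ih =>
      rw [Function.iterate_succ_apply', ih, Polynomial.derivative_sum]
      exact Finset.sum_congr rfl fun i _ => (Function.iterate_succ_apply' _ _ _).symm
    
lemma taylor_eval_zero (f : Polynomial ℝ) (N : ℕ) (h : f.natDegree ≤ N) :
    f.eval 0 = ∑ s ∈ Finset.range (N+1), (-1:ℝ)^s * ((Polynomial.hasseDeriv s f).eval 1) := by
  have h0 : f.eval 0 = ((Polynomial.taylor 1 f).eval (-1)) := by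
    rw [Polynomial.taylor_apply, Polynomial.eval_comp]
    norm_num
  rw [h0, Polynomial.eval_eq_sum_range'
    (lt_of_le_of_lt (by rw [Polynomial.natDegree_taylor]; exact h) (Nat.lt_succ_self N))]
  refine Finset.sum_congr rfl fun s _ => ?_
  rw [Polynomial.taylor_coeff]
  ring


noncomputable def stepQ : Polynomial ℂ → Polynomial ℂ :=
  fun w => Polynomial.derivative w + Polynomial.C Complex.I * w

lemma iterated_re (P Q : Polynomial ℂ) (j : ℕ) :
    iteratedDeriv j (fun x : ℝ => (P.eval ↑x + Q.eval ↑x * Complex.exp (↑x * Complex.I)).re)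
      = fun x : ℝ => ((Polynomial.derivative^[j] P).eval ↑x
          + (stepQ^[j] Q).eval ↑x * Complex.exp (↑x * Complex.I)).re := by
  induction j with
  | zero => simp
  | succ j ih =>
      rw [iteratedDeriv_succ, ih]
      funext x
      have h3 : HasDerivAt (fun z : ℂ => Complex.exp (z * Complex.I))
          (Complex.exp (↑x * Complex.I) * Complex.I) ↑x :=
        by simpa using ((hasDerivAt_id (↑x:ℂ)).mul_const Complex.I).cexp
      have hc : HasDerivAt (fun z : ℂ => (Polynomial.derivative^[j] P).eval z
            + (stepQ^[j] Q).eval z * Complex.exp (z * Complex.I))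
          ((Polynomial.derivative^[j+1] P).eval ↑x
            + (stepQ^[j+1] Q).eval ↑x * Complex.exp (↑x * Complex.I)) ↑x := by
        have h1 := (Polynomial.derivative^[j] P).hasDerivAt (↑x : ℂ)
        have h2 := (stepQ^[j] Q).hasDerivAt (↑x : ℂ)
        have h4 := h1.add (h2.mul h3)
        refine h4.congr_deriv ?_
        rw [Function.iterate_succ_apply', Function.iterate_succ_apply']
        simp [stepQ]
        ring
      exact (hc.real_of_complex).deriv

lemma stepQ_iterate (Q : Polynomial ℂ) (j : ℕ) :
    stepQ^[j] Q = ∑ r ∈ Finset.range (j+1),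
      Polynomial.C ((j.choose r : ℂ) * Complex.I ^ (j - r)) * Polynomial.derivative^[r] Q := by
  classical
  set d : Module.End ℂ (Polynomial ℂ) := Polynomial.derivative with hd
  set s : Module.End ℂ (Polynomial ℂ) := Complex.I • (1 : Module.End ℂ (Polynomial ℂ)) with hs
  have hcomm : Commute d s := by
    simp only [Commute, SemiconjBy, hs]
    rw [mul_smul_comm, smul_mul_assoc, mul_one, one_mul]
  have hfun : stepQ = ⇑(d + s) := by
    funext w
    simp only [stepQ, hd, hs, LinearMap.add_apply, LinearMap.smul_apply, Module.End.one_apply,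
      Polynomial.smul_eq_C_mul]
  rw [hfun, ← Module.End.pow_apply, hcomm.add_pow j, LinearMap.sum_apply]
  refine Finset.sum_congr rfl fun r hr => ?_
  rw [Module.End.mul_apply, Module.End.mul_apply]
  have h1 : ((j.choose r : ℕ) : Module.End ℂ (Polynomial ℂ)) Q = (j.choose r : ℂ) • Q := by
    rw [Module.End.natCast_apply]
    simp [Nat.cast_smul_eq_nsmul]
  rw [h1]
  have h2 : (s ^ (j - r)) ((j.choose r : ℂ) • Q) = (Complex.I ^ (j-r) * (j.choose r : ℂ)) • Q := by
    rw [hs, _root_.smul_pow, one_pow]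
    simp only [LinearMap.smul_apply, Module.End.one_apply, mul_smul]
  rw [h2, map_smul, Module.End.pow_apply]
  rw [Polynomial.smul_eq_C_mul]
  congr 2
  ring


noncomputable def PyP (n : ℕ) (g : ℕ → ℝ) : Polynomial ℂ :=
  ∑ r ∈ Finset.range (2*n+3), Polynomial.C (Complex.I^r * (g r : ℂ)) * Polynomial.X^(2*n+2-r)

lemma eval0_itd_PyP (n : ℕ) (g : ℕ → ℝ) (j : ℕ) :
    (Polynomial.derivative^[j] (PyP n g)).eval 0
      = if j ≤ 2*n+2 then Complex.I^(2*n+2-j) * (g (2*n+2-j) : ℂ) * (j.factorial : ℂ) else 0 := by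
  rw [PyP, itd_sum, Polynomial.eval_finset_sum]
  by_cases hj : j ≤ 2*n+2
  · rw [if_pos hj]
    rw [Finset.sum_eq_single (2*n+2-j)]
    · rw [eval0_itd_CXpow, if_pos (by omega), show 2*n+2-(2*n+2-j) = j from by omega,
        mul_assoc]
    · intro r hr hne
      rw [eval0_itd_CXpow, if_neg (by simp at hr; omega)]
    · intro h
      exact absurd (Finset.mem_range.mpr (by omega)) h
  · rw [if_neg hj]
    refine Finset.sum_eq_zero fun r hr => ?_
    rw [eval0_itd_CXpow, if_neg (by simp at hr; omega)]

lemma re_I_pow_odd (m : ℕ) (hm : m % 2 = 1) (t : ℝ) :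
    (Complex.I^m * (t:ℂ)).re = 0 := by
  obtain ⟨u, hu⟩ : ∃ u, m = 2*u+1 := ⟨m/2, by omega⟩
  subst hu
  have h : Complex.I^(2*u+1) * (t:ℂ) = (((-1:ℝ)^u * t : ℝ) : ℂ) * Complex.I := by
    rw [pow_succ, pow_mul, Complex.I_sq]
    push_cast
    ring
  rw [h, Complex.mul_I_re, Complex.ofReal_im, neg_zero]

lemma re_I_pow_even (u : ℕ) (t : ℝ) :
    (Complex.I^(2*u) * (t:ℂ)).re = (-1)^u * t := by
  have h : Complex.I^(2*u) * (t:ℂ) = (((-1:ℝ)^u * t : ℝ) : ℂ) := by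
    rw [pow_mul, Complex.I_sq]
    push_cast
    ring
  rw [h, Complex.ofReal_re]

lemma re_term_even (k m : ℕ) (t x : ℝ) :
    ((Polynomial.C (Complex.I^(2*k) * (t : ℂ)) * Polynomial.X^m).eval (x:ℂ)).re
      = (-1)^k * t * x^m := by
  simp only [Polynomial.eval_mul, Polynomial.eval_C, Polynomial.eval_pow, Polynomial.eval_X]
  have h : Complex.I^(2*k) * (t:ℂ) * (x:ℂ)^m = Complex.I^(2*k) * ((t * x^m : ℝ) : ℂ) := by
    push_cast; ring
  rw [h, re_I_pow_even]
  ring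

lemma re_term_odd (k m : ℕ) (t x : ℝ) :
    ((Polynomial.C (Complex.I^(2*k+1) * (t : ℂ)) * Polynomial.X^m).eval (x:ℂ)).re = 0 := by
  simp only [Polynomial.eval_mul, Polynomial.eval_C, Polynomial.eval_pow, Polynomial.eval_X]
  have h : Complex.I^(2*k+1) * (t:ℂ) * (x:ℂ)^m = Complex.I^(2*k+1) * ((t * x^m : ℝ) : ℂ) := by
    push_cast; ring
  rw [h, re_I_pow_odd _ (by omega)]

lemma re_term_exp_even (k m : ℕ) (t x : ℝ) :
    ((Polynomial.C (Complex.I^(2*k) * (t : ℂ)) * Polynomial.X^m).eval (x:ℂ)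
        * Complex.exp (↑x * Complex.I)).re
      = (-1)^k * t * x^m * Real.cos x := by
  simp only [Polynomial.eval_mul, Polynomial.eval_C, Polynomial.eval_pow, Polynomial.eval_X]
  have h : Complex.I^(2*k) * (t:ℂ) * (x:ℂ)^m * Complex.exp (↑x * Complex.I)
      = (((-1:ℝ)^k * t * x^m * Real.cos x : ℝ) : ℂ)
        + (((-1:ℝ)^k * t * x^m * Real.sin x : ℝ) : ℂ) * Complex.I := by
    rw [Complex.exp_mul_I, pow_mul, Complex.I_sq, ← Complex.ofReal_cos, ← Complex.ofReal_sin]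
    push_cast
    ring
  rw [h, Complex.add_re, Complex.mul_I_re, Complex.ofReal_im, neg_zero, add_zero,
    Complex.ofReal_re]

lemma re_term_exp_odd (k m : ℕ) (t x : ℝ) :
    ((Polynomial.C (Complex.I^(2*k+1) * (t : ℂ)) * Polynomial.X^m).eval (x:ℂ)
        * Complex.exp (↑x * Complex.I)).re
      = -((-1)^k * t * x^m * Real.sin x) := by
  simp only [Polynomial.eval_mul, Polynomial.eval_C, Polynomial.eval_pow, Polynomial.eval_X]
  have h : Complex.I^(2*k+1) * (t:ℂ) * (x:ℂ)^m * Complex.exp (↑x * Complex.I)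
      = ((-((-1:ℝ)^k * t * x^m * Real.sin x) : ℝ) : ℂ)
        + (((-1:ℝ)^k * t * x^m * Real.cos x : ℝ) : ℂ) * Complex.I := by
    have hI : Complex.I^(2*k+1) = ((-1:ℂ))^k * Complex.I := by
      rw [pow_succ, pow_mul, Complex.I_sq]
    rw [hI, Complex.exp_mul_I, ← Complex.ofReal_cos, ← Complex.ofReal_sin]
    push_cast
    linear_combination ((-1:ℂ))^k * (t:ℂ) * (x:ℂ)^m * Complex.sin (x:ℂ) * Complex.I_sq
  rw [h, Complex.add_re, Complex.mul_I_re, Complex.ofReal_im, neg_zero, add_zero,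
    Complex.ofReal_re]

-- new material

lemma re_PyP_eval (n : ℕ) (g : ℕ → ℝ) (x : ℝ) :
    ((PyP n g).eval (x:ℂ)).re
      = ∑ k ∈ Finset.range (n+2), (-1:ℝ)^k * x^(2*n+2-2*k) * g (2*k) := by
  rw [PyP, Polynomial.eval_finset_sum, Complex.re_sum,
    show 2*n+3 = 2*(n+1)+1 from by ring,
    sum_range_odd_split (n+1)]
  rw [Finset.sum_eq_zero (fun k _ => re_term_odd k (2*n+2-(2*k+1)) (g (2*k+1)) x), add_zero]
  refine Finset.sum_congr (by norm_num) fun k _ => ?_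
  rw [re_term_even k (2*n+2-2*k) (g (2*k)) x]
  ring

lemma re_PyP_eval_exp (n : ℕ) (g : ℕ → ℝ) (x : ℝ) :
    ((PyP n g).eval (x:ℂ) * Complex.exp (↑x * Complex.I)).re
      = (∑ k ∈ Finset.range (n+2), (-1:ℝ)^k * x^(2*n+2-2*k) * g (2*k)) * Real.cos x
        - (∑ k ∈ Finset.range (n+1), (-1:ℝ)^k * x^(2*n+1-2*k) * g (2*k+1)) * Real.sin x := by
  rw [PyP, Polynomial.eval_finset_sum, Finset.sum_mul, Complex.re_sum,
    show 2*n+3 = 2*(n+1)+1 from by ring,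
    sum_range_odd_split (n+1)]
  rw [Finset.sum_mul, Finset.sum_mul, sub_eq_add_neg, ← Finset.sum_neg_distrib]
  congr 1
  · refine Finset.sum_congr (by norm_num) fun k _ => ?_
    rw [re_term_exp_even k (2*n+2-2*k) (g (2*k)) x]
    ring
  · refine Finset.sum_congr rfl fun k _ => ?_
    rw [re_term_exp_odd k (2*n+2-(2*k+1)) (g (2*k+1)) x,
      show 2*n+2-(2*k+1) = 2*n+1-2*k from by omega]
    ring

lemma neg_one_pow_sub_real (a c : ℕ) (h : c ≤ a) :
    ((-1:ℝ))^(a-c) = (-1)^a * (-1)^c := by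
  have h1 : ((-1:ℝ))^(a-c) * (-1)^c = (-1)^a := by
    rw [← pow_add, Nat.sub_add_cancel h]
  have h2 : ((-1:ℝ))^c * (-1)^c = 1 := by
    rw [← pow_add]
    exact Even.neg_one_pow ⟨c, rfl⟩
  linear_combination ((-1:ℝ))^c * h1 - ((-1:ℝ))^(a-c) * h2

lemma star_taylor (q : Polynomial ℝ) (n j : ℕ) (hdeg : q.natDegree ≤ 2*n+2)
    (hj : j ≤ 2*n+2) (hje : j % 2 = 0) :
    (Polynomial.derivative^[2*n+2-j] q).eval 0 * (j.factorial : ℝ)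
      = ∑ r ∈ Finset.range (j+1), (-1:ℝ)^r * (j.choose r : ℝ) * (r.factorial : ℝ)
          * ((Polynomial.derivative^[2*n+2-r] q).eval 1) := by
  set f := Polynomial.derivative^[2*n+2-j] q with hf
  have hdf : f.natDegree ≤ j :=
    le_trans (Polynomial.natDegree_iterate_derivative _ _) (by omega)
  rw [← Finset.sum_range_reflect, taylor_eval_zero f j hdf, Finset.sum_mul]
  refine Finset.sum_congr rfl fun s hs => ?_
  rw [Finset.mem_range] at hs
  have hs' : s ≤ j := by omega
  have e1 : j+1-1-s = j - s := by omega
  have e2 : 2*n+2-(j-s) = s + (2*n+2-j) := by omega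
  rw [e1, e2, Function.iterate_add_apply]
  have e3 : (Polynomial.derivative^[s] f).eval 1
      = (s.factorial : ℝ) * ((Polynomial.hasseDeriv s) f).eval 1 := by
    rw [← Polynomial.factorial_smul_hasseDeriv s]
    simp only [Module.End.mul_apply, Module.End.natCast_apply, LinearMap.smul_apply,
      Polynomial.eval_smul, nsmul_eq_mul, Polynomial.eval_mul, Polynomial.eval_natCast]
  rw [e3]
  have e4 : (j.choose (j-s) : ℝ) = j.choose s := by rw [Nat.choose_symm hs']
  have e5 : ((-1:ℝ))^(j-s) = (-1)^s := by
    have h1 : ((-1:ℝ))^(j-s) * (-1)^s = 1 := by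
      rw [← pow_add, Nat.sub_add_cancel hs']
      exact Even.neg_one_pow (Nat.even_iff.mpr hje)
    have h2 : ((-1:ℝ))^s * (-1)^s = 1 := by
      rw [← pow_add]
      exact Even.neg_one_pow ⟨s, rfl⟩
    linear_combination ((-1:ℝ))^s * h1 - ((-1:ℝ))^(j-s) * h2
  have e6 : (j.choose s : ℝ) * s.factorial * (j-s).factorial = j.factorial := by
    exact_mod_cast congrArg (Nat.cast : ℕ → ℝ) (Nat.choose_mul_factorial_mul_factorial hs')
  rw [e4, e5]
  linear_combination (-((-1:ℝ))^s * ((Polynomial.hasseDeriv s f).eval 1)) * e6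

theorem stmt10 (n : ℕ)
    (q : Polynomial ℝ)
    (hq : q = Polynomial.C (((Polynomial.derivative (legendreP (2 * n + 1))).eval 0)⁻¹) *
      ((1 - Polynomial.X ^ 2) * Polynomial.derivative (legendreP (2 * n + 1))))
    (A B C : ℝ → ℝ)
    (hA : A = fun z => ∑ k ∈ Finset.range (n + 2),
      (-1 : ℝ) ^ k * z ^ (2 * n + 2 - 2 * k) * (Polynomial.derivative^[2 * k] q).eval 0)
    (hB : B = fun z => ∑ k ∈ Finset.range (n + 2),
      (-1 : ℝ) ^ k * z ^ (2 * n + 2 - 2 * k) * (Polynomial.derivative^[2 * k] q).eval 1)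
    (hC : C = fun z => ∑ k ∈ Finset.range (n + 1),
      (-1 : ℝ) ^ (k + 1) * z ^ (2 * n + 1 - 2 * k) * (Polynomial.derivative^[2 * k + 1] q).eval 1) :
    ∀ j : ℕ, j ≤ 2 * n + 3 →
      iteratedDeriv j (fun z : ℝ => A z - B z * Real.cos z - C z * Real.sin z) 0 = 0 := by
  intro j hj
  -- degree bound on q
  have hL : (legendreP (2*n+1)).natDegree ≤ 2*n+1 := by
    rw [legendreP]
    refine le_trans (Polynomial.natDegree_C_mul_le _ _) ?_
    refine Polynomial.natDegree_sum_le_of_forall_le _ _ fun k _ => ?_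
    refine le_trans (Polynomial.natDegree_C_mul_le _ _) ?_
    rw [Polynomial.natDegree_X_pow]
    omega
  have hdeg : q.natDegree ≤ 2*n+2 := by
    rw [hq]
    refine le_trans (Polynomial.natDegree_C_mul_le _ _) ?_
    refine le_trans Polynomial.natDegree_mul_le ?_
    have h1 : ((1 : Polynomial ℝ) - Polynomial.X^2).natDegree ≤ 2 := by
      refine le_trans (Polynomial.natDegree_sub_le _ _) ?_
      simp [Polynomial.natDegree_X_pow]
    have h2 := Polynomial.natDegree_derivative_le (legendreP (2*n+1))
    omega
  -- rewrite the function in complexified form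
  have hgf : (fun z : ℝ => A z - B z * Real.cos z - C z * Real.sin z)
      = fun x : ℝ => ((PyP n (fun r => (Polynomial.derivative^[r] q).eval 0)).eval ↑x
          + (PyP n (fun r => -((Polynomial.derivative^[r] q).eval 1))).eval ↑x
            * Complex.exp (↑x * Complex.I)).re := by
    funext x
    rw [hA, hB, hC, Complex.add_re, re_PyP_eval, re_PyP_eval_exp]
    have h1 : ∑ k ∈ Finset.range (n+2), (-1:ℝ)^k * x^(2*n+2-2*k)
          * (fun r => -((Polynomial.derivative^[r] q).eval 1)) (2*k)
        = -∑ k ∈ Finset.range (n+2),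
            (-1:ℝ)^k * x^(2*n+2-2*k) * (Polynomial.derivative^[2*k] q).eval 1 := by
      rw [← Finset.sum_neg_distrib]
      exact Finset.sum_congr rfl fun k _ => by ring
    have h2 : ∑ k ∈ Finset.range (n+1), (-1:ℝ)^k * x^(2*n+1-2*k)
          * (fun r => -((Polynomial.derivative^[r] q).eval 1)) (2*k+1)
        = ∑ k ∈ Finset.range (n+1),
            (-1:ℝ)^(k+1) * x^(2*n+1-2*k) * (Polynomial.derivative^[2*k+1] q).eval 1 := by
      refine Finset.sum_congr rfl fun k _ => ?_
      ring
    rw [h1, h2]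
    ring
  rw [hgf, iterated_re]
  simp only [Complex.ofReal_zero, zero_mul, Complex.exp_zero, mul_one]
  have hQ : (stepQ^[j] (PyP n (fun r => -((Polynomial.derivative^[r] q).eval 1)))).eval 0
      = ∑ r ∈ Finset.range (j+1), ((j.choose r : ℂ) * Complex.I^(j-r))
          * (if r ≤ 2*n+2 then Complex.I^(2*n+2-r)
              * ((-((Polynomial.derivative^[2*n+2-r] q).eval 1) : ℝ) : ℂ) * (r.factorial:ℂ)
            else 0) := by
    rw [stepQ_iterate, Polynomial.eval_finset_sum]
    exact Finset.sum_congr rfl fun r _ => by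
      rw [Polynomial.eval_mul, Polynomial.eval_C, eval0_itd_PyP]
  rw [hQ, eval0_itd_PyP, Complex.add_re, Complex.re_sum]
  rcases Nat.mod_two_eq_zero_or_one j with hje | hjo
  · -- even case
    have hju : j ≤ 2*n+2 := by omega
    obtain ⟨u, hu⟩ : ∃ u, j = 2*u := ⟨j/2, by omega⟩
    have hP : (if j ≤ 2*n+2 then Complex.I^(2*n+2-j)
          * (((Polynomial.derivative^[2*n+2-j] q).eval 0 : ℝ) : ℂ) * (j.factorial:ℂ) else 0).re
        = (-1:ℝ)^(n+1-u) * ((Polynomial.derivative^[2*n+2-j] q).eval 0 * j.factorial) := by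
      rw [if_pos hju]
      have h1 : Complex.I^(2*n+2-j) * (((Polynomial.derivative^[2*n+2-j] q).eval 0 : ℝ) : ℂ)
            * (j.factorial:ℂ)
          = Complex.I^(2*(n+1-u))
            * (((Polynomial.derivative^[2*n+2-j] q).eval 0 * j.factorial : ℝ) : ℂ) := by
        rw [show 2*n+2-j = 2*(n+1-u) from by omega]
        push_cast
        ring
      rw [h1, re_I_pow_even]
    have hS : ∀ r ∈ Finset.range (j+1),
        (((j.choose r : ℂ) * Complex.I^(j-r))
          * (if r ≤ 2*n+2 then Complex.I^(2*n+2-r)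
              * ((-((Polynomial.derivative^[2*n+2-r] q).eval 1) : ℝ) : ℂ) * (r.factorial:ℂ)
            else 0)).re
        = (-1:ℝ)^(n+1+u-r) * ((j.choose r : ℝ)
            * (-((Polynomial.derivative^[2*n+2-r] q).eval 1)) * r.factorial) := by
      intro r hr
      rw [Finset.mem_range] at hr
      have hr2 : r ≤ 2*n+2 := by omega
      rw [if_pos hr2]
      have h1 : ((j.choose r : ℂ) * Complex.I^(j-r))
            * (Complex.I^(2*n+2-r)
              * ((-((Polynomial.derivative^[2*n+2-r] q).eval 1) : ℝ) : ℂ) * (r.factorial:ℂ))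
          = Complex.I^(2*(n+1+u-r))
            * (((j.choose r : ℝ) * (-((Polynomial.derivative^[2*n+2-r] q).eval 1))
                * r.factorial : ℝ) : ℂ) := by
        rw [show 2*(n+1+u-r) = (j-r)+(2*n+2-r) from by omega, pow_add]
        push_cast
        ring
      rw [h1, re_I_pow_even]
    rw [hP, Finset.sum_congr rfl hS]
    have hsum : ∑ r ∈ Finset.range (j+1), (-1:ℝ)^(n+1+u-r) * ((j.choose r : ℝ)
            * (-((Polynomial.derivative^[2*n+2-r] q).eval 1)) * r.factorial)
        = -((-1:ℝ)^(n+1) * (-1)^u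
            * ((Polynomial.derivative^[2*n+2-j] q).eval 0 * j.factorial)) := by
      rw [star_taylor q n j hdeg hju hje, Finset.mul_sum, ← Finset.sum_neg_distrib]
      refine Finset.sum_congr rfl fun r hr => ?_
      rw [Finset.mem_range] at hr
      have h5 : ((-1:ℝ))^(n+1+u-r) = (-1)^(n+1+u) * (-1)^r :=
        neg_one_pow_sub_real (n+1+u) r (by omega)
      rw [h5, pow_add ((-1:ℝ)) (n+1) u]
      ring
    rw [hsum, neg_one_pow_sub_real (n+1) u (by omega)]
    ring
  · -- odd case
    have hP0 : (if j ≤ 2*n+2 then Complex.I^(2*n+2-j)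
          * (((Polynomial.derivative^[2*n+2-j] q).eval 0 : ℝ) : ℂ) * (j.factorial:ℂ) else 0).re
        = 0 := by
      by_cases h : j ≤ 2*n+2
      · rw [if_pos h]
        have h1 : Complex.I^(2*n+2-j) * (((Polynomial.derivative^[2*n+2-j] q).eval 0 : ℝ) : ℂ)
              * (j.factorial:ℂ)
            = Complex.I^(2*n+2-j)
              * (((Polynomial.derivative^[2*n+2-j] q).eval 0 * j.factorial : ℝ) : ℂ) := by
          push_cast
          ring
        rw [h1, re_I_pow_odd _ (by omega)]
      · rw [if_neg h, Complex.zero_re]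
    have hS0 : ∀ r ∈ Finset.range (j+1),
        (((j.choose r : ℂ) * Complex.I^(j-r))
          * (if r ≤ 2*n+2 then Complex.I^(2*n+2-r)
              * ((-((Polynomial.derivative^[2*n+2-r] q).eval 1) : ℝ) : ℂ) * (r.factorial:ℂ)
            else 0)).re
        = 0 := by
      intro r hr
      rw [Finset.mem_range] at hr
      by_cases h : r ≤ 2*n+2
      · rw [if_pos h]
        have h1 : ((j.choose r : ℂ) * Complex.I^(j-r))
              * (Complex.I^(2*n+2-r)
                * ((-((Polynomial.derivative^[2*n+2-r] q).eval 1) : ℝ) : ℂ) * (r.factorial:ℂ))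
            = Complex.I^((j-r)+(2*n+2-r))
              * (((j.choose r : ℝ) * (-((Polynomial.derivative^[2*n+2-r] q).eval 1))
                  * r.factorial : ℝ) : ℂ) := by
          rw [pow_add]
          push_cast
          ring
        rw [h1, re_I_pow_odd _ (by omega)]
      · rw [if_neg h, mul_zero, Complex.zero_re]
    rw [hP0, Finset.sum_eq_zero hS0, add_zero]
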